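/- Let A be a finite abelian group and B a proper subgroup of A. The centraliser of B in Aut(A) (that is, the set of automorphisms of A fixing every element of B) is trivial if and only if |B| is odd and |A| = 2|B|. -/

import Mathlib

namespace Stmt2Aux


variable {A : Type*} [CommGroup A]

/-- The "transvection" automorphism `a ↦ a * φ a` for a homomorphism with `φ ∘ φ = 1`. -/
def transvect (φ : A →* A) (h : ∀ a, φ (φ a) = 1) : A ≃* A where
  toFun a := a * φ a
  invFun a := a * (φ a)⁻¹
  left_inv a := by
    simp only [map_mul, h a, mul_one, mul_inv_rev]
    group
  right_inv a := by
    simp only [map_mul, map_inv, h a, inv_one, mul_one]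
    group
  map_mul' a b := by
    simp only [map_mul]
    exact mul_mul_mul_comm a b (φ a) (φ b)

@[simp] lemma transvect_apply (φ : A →* A) (h : ∀ a, φ (φ a) = 1) (a : A) :
    transvect φ h a = a * φ a := rfl

/-- Any finite abelian group of order divisible by a prime `p` admits a nontrivial
homomorphism to `ZMod p`. -/
lemma exists_hom_zmod (Q : Type*) [CommGroup Q] [Finite Q] {p : ℕ} (hp : p.Prime)
    (h : p ∣ Nat.card Q) :
    ∃ (χ : Q →* Multiplicative (ZMod p)) (q : Q), χ q ≠ 1 := by
  classical
  obtain ⟨ι, _, n, hn, ⟨e⟩⟩ := CommGroup.equiv_prod_multiplicative_zmod_of_finite Q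
  have hnz : ∀ i, NeZero (n i) := fun i => ⟨by have := hn i; omega⟩
  have hcard : Nat.card Q = ∏ i, n i := by
    rw [Nat.card_congr e.toEquiv]
    simp [Nat.card_eq_fintype_card, Fintype.card_pi, ZMod.card]
  rw [hcard] at h
  obtain ⟨i, -, hi⟩ := (Nat.Prime.prime hp).exists_mem_finset_dvd
    (by simpa using h : p ∣ ∏ i ∈ Finset.univ, n i)
  haveI : Fact p.Prime := ⟨hp⟩
  let f : ZMod (n i) →+ ZMod p := (ZMod.castHom hi (ZMod p)).toAddMonoidHom
  let χ : Q →* Multiplicative (ZMod p) :=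
    ((AddMonoidHom.toMultiplicative f).comp
      (Pi.evalMonoidHom (fun j => Multiplicative (ZMod (n j))) i)).comp e.toMonoidHom
  refine ⟨χ, e.symm (Pi.mulSingle i (Multiplicative.ofAdd (1 : ZMod (n i)))), ?_⟩
  simp only [χ, MonoidHom.comp_apply, MulEquiv.coe_toMonoidHom, MulEquiv.apply_symm_apply,
    Pi.evalMonoidHom_apply, Pi.mulSingle_eq_same]
  intro hc
  have h1 : f (1 : ZMod (n i)) = 0 := by
    exact hc
  rw [show f (1 : ZMod (n i)) = 1 from map_one (ZMod.castHom hi (ZMod p))] at h1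
  exact one_ne_zero h1




/-- A finite abelian group whose automorphism group is trivial has at most 2 elements. -/
lemma card_le_two_of_aut_trivial (C : Type*) [CommGroup C] [Finite C]
    (h : ∀ γ : C ≃* C, ∀ x, γ x = x) : Nat.card C ≤ 2 := by
  by_contra hgt
  push_neg at hgt
  -- every element squares to 1
  have hsq : ∀ x : C, x * x = 1 := by
    intro x
    have := h (MulEquiv.inv C) x
    simp only [MulEquiv.inv_apply] at this
    nth_rewrite 1 [← this]
    exact inv_mul_cancel x
  -- view `Additive C` as a `ZMod 2`-vector space
  letI : Module (ZMod 2) (Additive C) := AddCommGroup.zmodModule (by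
    intro x
    show (2 : ℕ) • x = 0
    rw [two_nsmul]
    exact hsq x.toMul)
  letI : Fintype C := Fintype.ofFinite C
  have hcard : Fintype.card (Additive C) = 2 ^ Module.finrank (ZMod 2) (Additive C) := by
    have := Module.card_eq_pow_finrank (K := ZMod 2) (V := Additive C)
    simpa [ZMod.card] using this
  have hrank : 2 ≤ Module.finrank (ZMod 2) (Additive C) := by
    have h2 : 2 < Fintype.card (Additive C) := by
      have h3 : Nat.card C = Fintype.card C := Nat.card_eq_fintype_card
      have h4 : Fintype.card (Additive C) = Fintype.card C := Fintype.card_congr Additive.toMul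
      omega
    by_contra hr
    push_neg at hr
    interval_cases hh : Module.finrank (ZMod 2) (Additive C) <;> omega
  classical
  let b := Module.Free.chooseBasis (ZMod 2) (Additive C)
  have hι : 1 < Fintype.card (Module.Free.ChooseBasisIndex (ZMod 2) (Additive C)) := by
    rw [← Module.finrank_eq_card_chooseBasisIndex]
    omega
  obtain ⟨i, j, hij⟩ := Fintype.exists_pair_of_one_lt_card hι
  let e := b.equiv b (Equiv.swap i j)
  let γ : C ≃* C :=
  { toFun := fun c => (e (Additive.ofMul c)).toMul
    invFun := fun c => (e.symm (Additive.ofMul c)).toMul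
    left_inv := fun c => by simp
    right_inv := fun c => by simp
    map_mul' := fun x y => e.map_add (Additive.ofMul x) (Additive.ofMul y) }
  have := h γ (b i).toMul
  have heq : e (b i) = b i := this
  rw [Module.Basis.equiv_apply, Equiv.swap_apply_left] at heq
  exact hij (b.injective heq).symm




variable {A : Type*} [CommGroup A]

/-- Extend an automorphism of a complement `C` of `B` to `A`, acting as identity on `B`. -/
def extAut (B C : Subgroup A) (u v m n : ℤ)
    (huv : u * m + v * n = 1)
    (hCmem : ∀ a : A, a ^ (u * m) ∈ C)
    (hBum : ∀ b ∈ B, b ^ (u * m) = 1)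
    (hBvn : ∀ b ∈ B, b ^ (v * n) = b)
    (hBmem : ∀ a : A, a ^ (v * n) ∈ B)
    (hCum : ∀ c ∈ C, c ^ (u * m) = c)
    (hCvn : ∀ c ∈ C, c ^ (v * n) = 1)
    (γ : ↥C ≃* ↥C) : A ≃* A where
  toFun a := a ^ (v * n) * (γ ⟨a ^ (u * m), hCmem a⟩ : A)
  invFun a := a ^ (v * n) * (γ.symm ⟨a ^ (u * m), hCmem a⟩ : A)
  left_inv a := by
    dsimp only
    set x := a ^ (v * n) with hxdef
    have hx : x ∈ B := hBmem a
    set c := γ ⟨a ^ (u * m), hCmem a⟩ with hcdef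
    have h1 : (x * (c : A)) ^ (v * n) = x := by
      rw [mul_zpow, hBvn x hx, hCvn (c : A) c.2, mul_one]
    have h2 : (x * (c : A)) ^ (u * m) = (c : A) := by
      rw [mul_zpow, hBum x hx, hCum (c : A) c.2, one_mul]
    have h3 : (⟨(x * (c : A)) ^ (u * m), hCmem _⟩ : ↥C) = c := Subtype.ext h2
    rw [h1, h3, MulEquiv.symm_apply_apply]
    rw [hxdef, ← zpow_add, add_comm, huv, zpow_one]
  right_inv a := by
    dsimp only
    set x := a ^ (v * n) with hxdef
    have hx : x ∈ B := hBmem a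
    set c := γ.symm ⟨a ^ (u * m), hCmem a⟩ with hcdef
    have h1 : (x * (c : A)) ^ (v * n) = x := by
      rw [mul_zpow, hBvn x hx, hCvn (c : A) c.2, mul_one]
    have h2 : (x * (c : A)) ^ (u * m) = (c : A) := by
      rw [mul_zpow, hBum x hx, hCum (c : A) c.2, one_mul]
    have h3 : (⟨(x * (c : A)) ^ (u * m), hCmem _⟩ : ↥C) = c := Subtype.ext h2
    rw [h1, h3, MulEquiv.apply_symm_apply]
    rw [hxdef, ← zpow_add, add_comm, huv, zpow_one]
  map_mul' a b := by
    have h3 : (⟨(a * b) ^ (u * m), hCmem _⟩ : ↥C)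
        = ⟨a ^ (u * m), hCmem a⟩ * ⟨b ^ (u * m), hCmem b⟩ := by
      apply Subtype.ext
      simp [mul_zpow]
    rw [h3, map_mul, mul_zpow]
    push_cast
    exact mul_mul_mul_comm _ _ _ _

lemma extAut_apply (B C : Subgroup A) (u v m n : ℤ) (huv : u * m + v * n = 1)
    (hCmem : ∀ a : A, a ^ (u * m) ∈ C)
    (hBum : ∀ b ∈ B, b ^ (u * m) = 1) (hBvn : ∀ b ∈ B, b ^ (v * n) = b)
    (hBmem : ∀ a : A, a ^ (v * n) ∈ B)
    (hCum : ∀ c ∈ C, c ^ (u * m) = c) (hCvn : ∀ c ∈ C, c ^ (v * n) = 1)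
    (γ : ↥C ≃* ↥C) (a : A) :
    extAut B C u v m n huv hCmem hBum hBvn hBmem hCum hCvn γ a
      = a ^ (v * n) * (γ ⟨a ^ (u * m), hCmem a⟩ : A) := rfl


lemma forward {A : Type*} [CommGroup A] [Fintype A] (B : Subgroup A) (hB : B ≠ ⊤)
    (htriv : ∀ α : A ≃* A, (∀ b ∈ B, α b = b) → α = MulEquiv.refl A) :
    Odd (Nat.card ↥B) ∧ Nat.card A = 2 * Nat.card ↥B := by
  classical
  set m := Nat.card ↥B with hmdef
  set n := Nat.card (A ⧸ B) with hndef
  have hm0 : 0 < m := Nat.card_pos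
  have hn0 : 0 < n := Nat.card_pos
  have hcardA : Nat.card A = n * m := Subgroup.card_eq_card_quotient_mul_card_subgroup B
  have hn1 : n ≠ 1 := fun h1 => hB (Subgroup.index_eq_one.mp h1)
  -- Step 1: |B| and [A:B] are coprime
  have hcop : Nat.Coprime m n := by
    by_contra hg
    obtain ⟨p, hp, hpg⟩ := Nat.exists_prime_and_dvd hg
    have hpm : p ∣ m := hpg.trans (Nat.gcd_dvd_left m n)
    have hpn : p ∣ n := hpg.trans (Nat.gcd_dvd_right m n)
    haveI : Fact p.Prime := ⟨hp⟩
    obtain ⟨t0, ht0⟩ := exists_prime_orderOf_dvd_card (G := ↥B) p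
      (by rwa [← Nat.card_eq_fintype_card])
    set t : A := (t0 : A) with htdef
    have htord : orderOf t = p := by
      rw [← ht0]; exact orderOf_injective B.subtype (Subgroup.subtype_injective B) t0
    obtain ⟨χ, q, hq⟩ := exists_hom_zmod (A ⧸ B) hp hpn
    have htp : (zmultiplesHom (Additive A) (Additive.ofMul t)) ((p : ℤ)) = 0 := by
      simp only [zmultiplesHom_apply]
      show Additive.ofMul (t ^ ((p : ℤ))) = 0
      rw [zpow_natCast, ← htord, pow_orderOf_eq_one]
      rfl
    set ψ : Multiplicative (ZMod p) →* A :=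
      AddMonoidHom.toMultiplicativeLeft
        (ZMod.lift p ⟨zmultiplesHom (Additive A) (Additive.ofMul t), htp⟩) with hψdef
    have hψk : ∀ k : ℤ, ψ (Multiplicative.ofAdd ((k : ZMod p))) = t ^ k := by
      intro k
      show ((ZMod.lift p ⟨_, htp⟩) ((k : ZMod p))).toMul = t ^ k
      rw [ZMod.lift_coe]
      rfl
    have hψmem : ∀ x : Multiplicative (ZMod p), ψ x ∈ B := by
      intro x
      obtain ⟨k, hk⟩ := ZMod.intCast_surjective (n := p) x.toAdd
      have hx : x = Multiplicative.ofAdd ((k : ZMod p)) := by rw [hk, ofAdd_toAdd]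
      rw [hx, hψk]
      exact Subgroup.zpow_mem B t0.2 k
    have hψ1 : ∀ x, ψ x = 1 → x = 1 := by
      intro x hx
      obtain ⟨k, hk⟩ := ZMod.intCast_surjective (n := p) x.toAdd
      have hxe : x = Multiplicative.ofAdd ((k : ZMod p)) := by rw [hk, ofAdd_toAdd]
      rw [hxe, hψk] at hx
      have hdvd : ((p : ℤ)) ∣ k := by
        rw [← htord] at hp ⊢
        exact_mod_cast orderOf_dvd_iff_zpow_eq_one.mpr hx
      have : ((k : ZMod p)) = 0 := (ZMod.intCast_zmod_eq_zero_iff_dvd k p).mpr hdvd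
      rw [hxe, this]
      rfl
    set φ : A →* A := ψ.comp (χ.comp (QuotientGroup.mk' B)) with hφdef
    have hφmem : ∀ a : A, φ a ∈ B := fun a => hψmem _
    have hφB : ∀ b ∈ B, φ b = 1 := by
      intro b hb
      have h1 : (QuotientGroup.mk' B) b = 1 := (QuotientGroup.eq_one_iff b).mpr hb
      simp only [hφdef, MonoidHom.comp_apply, h1, map_one]
    have hφφ : ∀ a, φ (φ a) = 1 := fun a => hφB _ (hφmem a)
    have halpha := htriv (transvect φ hφφ)
      (fun b hb => by rw [transvect_apply, hφB b hb, mul_one])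
    obtain ⟨a, ha⟩ := QuotientGroup.mk'_surjective B q
    have h5 : transvect φ hφφ a = a := by rw [halpha]; rfl
    rw [transvect_apply] at h5
    have h6 : φ a = 1 := mul_eq_left.mp h5
    apply hq
    apply hψ1
    rw [← ha]
    exact h6
  -- Step 2: Bezout and the complement C
  set u := Nat.gcdA m n with hudef
  set v := Nat.gcdB m n with hvdef
  have hbez : u * (m : ℤ) + v * (n : ℤ) = 1 := by
    have hg1 : Nat.gcd m n = 1 := hcop
    have hb0 := Nat.gcd_eq_gcd_ab m n
    rw [hg1] at hb0
    push_cast at hb0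
    linear_combination -hb0
  set C : Subgroup A := (powMonoidHom n : A →* A).ker with hCdef
  have hCiff : ∀ c : A, c ∈ C ↔ c ^ ((n : ℤ)) = 1 := by
    intro c
    rw [hCdef, MonoidHom.mem_ker, powMonoidHom_apply, zpow_natCast]
  have hAmn : ∀ a : A, a ^ ((m : ℤ) * n) = 1 := by
    intro a
    have h1 : a ^ (Nat.card A) = 1 := pow_card_eq_one'
    rw [hcardA] at h1
    rw [show (m : ℤ) * n = ((n * m : ℕ) : ℤ) by push_cast; ring, zpow_natCast, h1]
  have hBm : ∀ b ∈ B, b ^ ((m : ℤ)) = 1 := by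
    intro b hb
    have h1 : (⟨b, hb⟩ : ↥B) ^ m = 1 := by rw [hmdef]; exact pow_card_eq_one'
    have h2 : b ^ m = 1 := by
      have := congrArg (Subgroup.subtype B) h1
      simpa using this
    rw [zpow_natCast, h2]
  have hanB : ∀ a : A, a ^ ((n : ℤ)) ∈ B := by
    intro a
    have h1 : ((QuotientGroup.mk' B) a) ^ n = 1 := by rw [hndef]; exact pow_card_eq_one'
    rw [← map_pow] at h1
    rw [zpow_natCast]
    exact (QuotientGroup.eq_one_iff _).mp h1
  have hCmem : ∀ a : A, a ^ (u * (m : ℤ)) ∈ C := by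
    intro a
    rw [hCiff, ← zpow_mul,
      show u * (m : ℤ) * (n : ℤ) = ((m : ℤ) * n) * u from by ring, zpow_mul, hAmn a, one_zpow]
  have hBum : ∀ b ∈ B, b ^ (u * (m : ℤ)) = 1 := by
    intro b hb
    rw [mul_comm u ((m : ℤ)), zpow_mul, hBm b hb, one_zpow]
  have hBvn : ∀ b ∈ B, b ^ (v * (n : ℤ)) = b := by
    intro b hb
    have h1 : v * (n : ℤ) = 1 - u * m := by linarith
    rw [h1, zpow_sub, zpow_one, hBum b hb]
    simp
  have hBmem : ∀ a : A, a ^ (v * (n : ℤ)) ∈ B := by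
    intro a
    rw [mul_comm v ((n : ℤ)), zpow_mul]
    exact Subgroup.zpow_mem B (hanB a) v
  have hCvn : ∀ c ∈ C, c ^ (v * (n : ℤ)) = 1 := by
    intro c hc
    rw [mul_comm v ((n : ℤ)), zpow_mul, (hCiff c).mp hc, one_zpow]
  have hCum : ∀ c ∈ C, c ^ (u * (m : ℤ)) = c := by
    intro c hc
    have h1 : u * (m : ℤ) = 1 - v * n := by linarith
    rw [h1, zpow_sub, zpow_one, hCvn c hc]
    simp
  -- every automorphism of C is trivial
  have hγ : ∀ (γ : ↥C ≃* ↥C) (z : ↥C), γ z = z := by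
    intro γ z
    have hfix : ∀ b ∈ B, extAut B C u v m n hbez hCmem hBum hBvn hBmem hCum hCvn γ b = b := by
      intro b hb
      rw [extAut_apply, hBvn b hb]
      have h1 : (⟨b ^ (u * (m : ℤ)), hCmem b⟩ : ↥C) = 1 := Subtype.ext (hBum b hb)
      rw [h1, map_one, Subgroup.coe_one, mul_one]
    have h2 := htriv _ hfix
    have h3 : extAut B C u v m n hbez hCmem hBum hBvn hBmem hCum hCvn γ (z : A) = (z : A) := by
      rw [h2]; rfl
    rw [extAut_apply] at h3
    have hz1 : ((z : A)) ^ (v * (n : ℤ)) = 1 := hCvn _ z.2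
    have hz2 : (⟨((z : A)) ^ (u * (m : ℤ)), hCmem _⟩ : ↥C) = z := Subtype.ext (hCum _ z.2)
    rw [hz1, hz2, one_mul] at h3
    exact Subtype.ext h3
  -- C is isomorphic to A ⧸ B
  have hCcard : Nat.card ↥C = n := by
    have hinj : Function.Injective ((QuotientGroup.mk' B).comp C.subtype) := by
      rw [← MonoidHom.ker_eq_bot_iff, eq_bot_iff]
      intro z hz
      have hzB : ((z : A)) ∈ B := by
        have : (QuotientGroup.mk' B) ((z : A)) = 1 := hz
        exact (QuotientGroup.eq_one_iff _).mp this
      have hz1 : ((z : A)) = 1 := by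
        have e2 := hCum _ z.2
        rw [hBum _ hzB] at e2
        exact e2.symm
      simpa [Subgroup.mem_bot] using Subtype.ext hz1
    have hsurj : Function.Surjective ((QuotientGroup.mk' B).comp C.subtype) := by
      intro q
      obtain ⟨a, ha⟩ := QuotientGroup.mk'_surjective B q
      refine ⟨⟨a ^ (u * (m : ℤ)), hCmem a⟩, ?_⟩
      show (QuotientGroup.mk' B) (a ^ (u * (m : ℤ))) = q
      rw [map_zpow, ← ha]
      have hq1 : ((QuotientGroup.mk' B) a) ^ ((n : ℤ)) = 1 := by
        rw [← map_zpow]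
        exact (QuotientGroup.eq_one_iff _).mpr (hanB a)
      have : ((QuotientGroup.mk' B) a) ^ (u * (m : ℤ))
          = ((QuotientGroup.mk' B) a) ^ (1 - v * (n : ℤ)) := by
        congr 1
        linarith
      rw [this, zpow_sub, zpow_one, mul_comm v ((n : ℤ)), zpow_mul, hq1, one_zpow]
      simp
    have := Nat.card_congr (MulEquiv.ofBijective _ ⟨hinj, hsurj⟩).toEquiv
    rw [this, hndef]
  have hCle : Nat.card ↥C ≤ 2 := card_le_two_of_aut_trivial ↥C hγ
  have hn2 : n = 2 := by omega
  constructor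
  · rw [hn2] at hcop
    exact Nat.Coprime.odd_of_right hcop
  · rw [hcardA, hn2]




lemma card_two_eq {Q : Type*} [Group Q] (hQ : Nat.card Q = 2) {x y : Q}
    (hx : x ≠ 1) (hy : y ≠ 1) : x = y := by
  classical
  have hfin : Finite Q := Nat.finite_of_card_ne_zero (by omega)
  haveI := Fintype.ofFinite Q
  rw [Nat.card_eq_fintype_card] at hQ
  by_contra hxy
  have hcard : ({1, x, y} : Finset Q).card = 3 := by
    rw [Finset.card_insert_of_notMem (by simp [Ne.symm hx, Ne.symm hy]),
      Finset.card_insert_of_notMem (by simp [hxy]), Finset.card_singleton]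
  have := Finset.card_le_univ ({1, x, y} : Finset Q)
  rw [hcard] at this
  omega

lemma backward {A : Type*} [CommGroup A] [Fintype A] (B : Subgroup A)
    (hodd : Odd (Nat.card ↥B)) (hcard : Nat.card A = 2 * Nat.card ↥B)
    (α : A ≃* A) (hα : ∀ b ∈ B, α b = b) : α = MulEquiv.refl A := by
  classical
  set m := Nat.card ↥B with hmdef
  have hm0 : 0 < m := Nat.card_pos
  have hq2 : Nat.card (A ⧸ B) = 2 := by
    have h1 : Nat.card A = Nat.card (A ⧸ B) * m := Subgroup.card_eq_card_quotient_mul_card_subgroup B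
    rw [hcard] at h1
    exact Nat.eq_of_mul_eq_mul_right hm0 h1.symm
  ext a
  show α a = a
  by_cases haB : a ∈ B
  · exact hα a haB
  · -- α a ∉ B
    have hαa : α a ∉ B := by
      intro hmem
      have : α a = a := α.injective (hα (α a) hmem)
      rw [this] at hmem
      exact haB hmem
    -- images in the quotient agree
    have hmk : (QuotientGroup.mk (α a) : A ⧸ B) = QuotientGroup.mk a := by
      apply card_two_eq hq2 <;>
        simpa [QuotientGroup.eq_one_iff] using ‹_›
    have htB : a⁻¹ * α a ∈ B := (QuotientGroup.eq).mp hmk.symm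
    have ha2 : a ^ 2 ∈ B := by
      have h1 : (QuotientGroup.mk a : A ⧸ B) ^ 2 = 1 := by
        rw [← hq2]; exact pow_card_eq_one'
      rw [← QuotientGroup.mk_pow] at h1
      exact (QuotientGroup.eq_one_iff _).mp h1
    have ht2 : (a⁻¹ * α a) ^ 2 = 1 := by
      rw [mul_pow, ← map_pow, hα (a ^ 2) ha2, inv_pow, inv_mul_cancel]
    set tB : ↥B := ⟨a⁻¹ * α a, htB⟩ with htBdef
    have htB2 : tB ^ 2 = 1 := Subtype.ext (by simpa using ht2)
    have hd2 : orderOf tB ∣ 2 := orderOf_dvd_of_pow_eq_one htB2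
    have hdm : orderOf tB ∣ m := by rw [hmdef]; exact orderOf_dvd_natCard tB
    have hgcd : Nat.gcd 2 m = 1 := Nat.coprime_two_left.mpr hodd
    have hord1 : orderOf tB = 1 := Nat.eq_one_of_dvd_one (hgcd ▸ Nat.dvd_gcd hd2 hdm)
    have htB1 : tB = 1 := orderOf_eq_one_iff.mp hord1
    have : a⁻¹ * α a = 1 := by
      exact congrArg Subtype.val htB1
    exact (inv_mul_eq_one.mp this).symm


end Stmt2Aux

theorem stmt2 {A : Type*} [CommGroup A] [Fintype A] (B : Subgroup A) (hB : B ≠ ⊤) :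
    (∀ α : A ≃* A, (∀ b ∈ B, α b = b) → α = MulEquiv.refl A) ↔
      (Odd (Nat.card B) ∧ Nat.card A = 2 * Nat.card B) := by
  constructor
  · intro h
    exact Stmt2Aux.forward B hB h
  · rintro ⟨hodd, hcard⟩ α hα
    exact Stmt2Aux.backward B hodd hcard α hα
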